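/- Let G be a minimal nonperfectly divisible fork-free graph, v ∈ V(G), and C = v_1v_2…v_nv_1 an odd hole contained in G[M(v)] (n ≥ 5 odd, indices modulo n). Let u_i ∈ U_i(C) and u_j ∈ U_j(C) with 1 ≤ i < j ≤ n. If u_i is adjacent to u_j, then N(u_i) ∩ M(C) = N(u_j) ∩ M(C). -/

import Mathlib

open SimpleGraph

/-- `G` contains an induced copy of `H`. -/
def HasInducedCopy {V W : Type*} (G : SimpleGraph V) (H : SimpleGraph W) : Prop :=
  ∃ f : W ↪ V, ∀ a b : W, G.Adj (f a) (f b) ↔ H.Adj a b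

/-- The fork: the claw `K_{1,3}` with one edge subdivided once. -/
def fork : SimpleGraph (Fin 5) :=
  SimpleGraph.fromEdgeSet {s(0, 1), s(0, 2), s(0, 3), s(3, 4)}

/-- The claw `K_{1,3}`. -/
def claw : SimpleGraph (Fin 4) :=
  SimpleGraph.fromEdgeSet {s(0, 1), s(0, 2), s(0, 3)}

/-- The path on 7 vertices. -/
def P7 : SimpleGraph (Fin 7) := SimpleGraph.pathGraph 7

/-- The disjoint union of a path on 6 vertices and a single vertex. -/
def P6K1 : SimpleGraph (Fin 7) :=
  SimpleGraph.fromEdgeSet {s(0, 1), s(1, 2), s(2, 3), s(3, 4), s(4, 5)}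

/-- A graph is perfect if every induced subgraph has chromatic number
equal to clique number. -/
def IsPerfect {V : Type*} (G : SimpleGraph V) : Prop :=
  ∀ s : Set V, (G.induce s).chromaticNumber = ((G.induce s).cliqueNum : ℕ∞)

/-- A graph is perfectly divisible if the vertex set of every (nonempty) induced
subgraph `H` can be partitioned into `A` and `B` with `H[A]` perfect and
`ω(H[B]) < ω(H)`. -/
def PerfectlyDivisible {V : Type*} (G : SimpleGraph V) : Prop :=
  ∀ s : Set V, s.Nonempty → ∃ A B : Set V, A ∪ B = s ∧ A ∩ B = ∅ ∧
    IsPerfect (G.induce A) ∧ (G.induce B).cliqueNum < (G.induce s).cliqueNum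

/-- A graph is minimal nonperfectly divisible if it is not perfectly divisible but
every proper induced subgraph is perfectly divisible. -/
def MinimalNPD {V : Type*} (G : SimpleGraph V) : Prop :=
  ¬ PerfectlyDivisible G ∧ ∀ s : Set V, s ≠ Set.univ → PerfectlyDivisible (G.induce s)

/-- The open neighborhood of a set `S`: all vertices outside `S` with a neighbor in `S`. -/
def NSet {V : Type*} (G : SimpleGraph V) (S : Set V) : Set V :=
  {v | v ∉ S ∧ ∃ x ∈ S, G.Adj x v}

/-- `M(S)`: the vertices outside `S ∪ N(S)`. -/
def MSet {V : Type*} (G : SimpleGraph V) (S : Set V) : Set V :=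
  {v | v ∉ S ∧ v ∉ NSet G S}

/-- `M(v)`: the set of vertices distinct from `v` and nonadjacent to `v`. -/
def Mv {V : Type*} (G : SimpleGraph V) (v : V) : Set V :=
  {u | u ≠ v ∧ ¬ G.Adj v u}

/-- `f : ZMod n → V` describes a hole (an induced cycle of length at least 4) of `G`. -/
def IsHole {V : Type*} (G : SimpleGraph V) (n : ℕ) (f : ZMod n → V) : Prop :=
  4 ≤ n ∧ Function.Injective f ∧
    ∀ i j : ZMod n, G.Adj (f i) (f j) ↔ (j = i + 1 ∨ i = j + 1)

/-- `U(C)`: the balloon centers of the hole `C` given by `f`. -/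
def USet {V : Type*} (G : SimpleGraph V) (n : ℕ) (f : ZMod n → V) : Set V :=
  {u | u ∈ NSet G (MSet G (Set.range f)) ∧
    ∃ i : ZMod n, G.neighborSet u ∩ Set.range f = {f i, f (i + 1)}}

/-- `U_i(C)`: the balloon centers of `C` attached at `v_i v_{i+1}`. -/
def UiSet {V : Type*} (G : SimpleGraph V) (n : ℕ) (f : ZMod n → V) (i : ZMod n) : Set V :=
  {u | u ∈ NSet G (MSet G (Set.range f)) ∧
    G.neighborSet u ∩ Set.range f = {f i, f (i + 1)}}

/-- `U'(C)`: the parachute centers of `C`. -/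
def U'Set {V : Type*} (G : SimpleGraph V) (n : ℕ) (f : ZMod n → V) : Set V :=
  {u | u ∈ NSet G (MSet G (Set.range f)) ∧ ∀ i : ZMod n, G.Adj u (f i)}

/-- `Z(C)`: vertices of `N(V(C)) \ N(M(C))` not complete to `V(C)`. -/
def ZSet {V : Type*} (G : SimpleGraph V) (n : ℕ) (f : ZMod n → V) : Set V :=
  {z | z ∈ NSet G (Set.range f) ∧ z ∉ NSet G (MSet G (Set.range f)) ∧
    ¬ ∀ i : ZMod n, G.Adj z (f i)}

/-- `Z'(C) = N(V(C)) \ (N(M(C)) ∪ Z(C))`. -/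
def Z'Set {V : Type*} (G : SimpleGraph V) (n : ℕ) (f : ZMod n → V) : Set V :=
  NSet G (Set.range f) \ (NSet G (MSet G (Set.range f)) ∪ ZSet G n f)

/-- `Y(C) = N_{M(C)}(U(C))`. -/
def YSet {V : Type*} (G : SimpleGraph V) (n : ℕ) (f : ZMod n → V) : Set V :=
  {y | y ∈ MSet G (Set.range f) ∧ ∃ u ∈ USet G n f, G.Adj u y}

/-- `x` and `y` lie in a common connected component of `G[S]`. -/
def SameComp {V : Type*} (G : SimpleGraph V) (S : Set V) (x y : V) : Prop :=
  ∃ (hx : x ∈ S) (hy : y ∈ S), (G.induce S).Reachable ⟨x, hx⟩ ⟨y, hy⟩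

/-- `Y'(C)`: the union of the components of `G[M(C)]` meeting `Y(C)`. -/
def Y'Set {V : Type*} (G : SimpleGraph V) (n : ℕ) (f : ZMod n → V) : Set V :=
  {x | ∃ y ∈ YSet G n f, SameComp G (MSet G (Set.range f)) x y}

lemma fork_adj (a b : Fin 5) : fork.Adj a b ↔
    ((s(a,b) = s(0,1) ∨ s(a,b) = s(0,2) ∨ s(a,b) = s(0,3) ∨ s(a,b) = s(3,4)) ∧ a ≠ b) := by
  rw [fork, fromEdgeSet_adj]
  simp [Set.mem_insert_iff]

lemma fork_of_pattern {V : Type*} (G : SimpleGraph V) (x0 x1 x2 x3 x4 : V)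
    (d04 : x0 ≠ x4) (d12 : x1 ≠ x2) (d13 : x1 ≠ x3) (d14 : x1 ≠ x4)
    (d23 : x2 ≠ x3) (d24 : x2 ≠ x4)
    (e01 : G.Adj x0 x1) (e02 : G.Adj x0 x2) (e03 : G.Adj x0 x3) (e34 : G.Adj x3 x4)
    (n04 : ¬ G.Adj x0 x4) (n12 : ¬ G.Adj x1 x2) (n13 : ¬ G.Adj x1 x3)
    (n14 : ¬ G.Adj x1 x4) (n23 : ¬ G.Adj x2 x3) (n24 : ¬ G.Adj x2 x4) :
    HasInducedCopy G fork := by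
  have d01 := e01.ne; have d02 := e02.ne; have d03 := e03.ne; have d34 := e34.ne
  have d10 := d01.symm; have d20 := d02.symm; have d30 := d03.symm; have d43 := d34.symm
  have d40 := d04.symm; have d21 := d12.symm; have d31 := d13.symm; have d41 := d14.symm
  have d32 := d23.symm; have d42 := d24.symm
  have n21 : ¬ G.Adj x2 x1 := fun h => n12 h.symm
  have n31 : ¬ G.Adj x3 x1 := fun h => n13 h.symm
  have n41 : ¬ G.Adj x4 x1 := fun h => n14 h.symm
  have n32 : ¬ G.Adj x3 x2 := fun h => n23 h.symm
  have n42 : ¬ G.Adj x4 x2 := fun h => n24 h.symm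
  have n40 : ¬ G.Adj x4 x0 := fun h => n04 h.symm
  have e10 := e01.symm; have e20 := e02.symm; have e30 := e03.symm; have e43 := e34.symm
  refine ⟨⟨![x0,x1,x2,x3,x4], ?_⟩, ?_⟩
  · intro a b h
    fin_cases a <;> fin_cases b <;>
      first
        | rfl
        | (exfalso; revert h;
           simp only [Matrix.cons_val_zero, Matrix.cons_val_one, Matrix.head_cons,
             Matrix.cons_val_two, Matrix.tail_cons, Matrix.cons_val_three,
             Matrix.cons_val_four, Matrix.cons_val_fin_one];
           assumption)
  · intro a b
    fin_cases a <;> fin_cases b <;>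
      simp only [Matrix.cons_val_zero, Matrix.cons_val_one, Matrix.head_cons,
        Matrix.cons_val_two, Matrix.tail_cons, Matrix.cons_val_three,
        Matrix.cons_val_four, Matrix.cons_val_fin_one] <;>
      first
        | exact iff_of_true ‹_› (by rw [fork_adj]; decide)
        | exact iff_of_false ‹_› (by rw [fork_adj]; decide)
        | exact iff_of_false (G.loopless.irrefl _) (by rw [fork_adj]; decide)

lemma key_half {V : Type*} (G : SimpleGraph V)
    (hfork : ¬ HasInducedCopy G fork)
    (n : ℕ) (f : ZMod n → V) (hC : IsHole G n f) (hn : 5 ≤ n)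
    (i j : ZMod n) (hij : i ≠ j) (ui uj : V)
    (hui : ui ∈ UiSet G n f i) (huj : uj ∈ UiSet G n f j) (hadj : G.Adj ui uj)
    (y : V) (hyM : y ∈ MSet G (Set.range f)) (hyui : G.Adj ui y) :
    G.Adj uj y := by
  by_contra hyuj
  obtain ⟨hn4, hinj, hcyc⟩ := hC
  obtain ⟨huiN, huiC⟩ := hui
  obtain ⟨hujN, hujC⟩ := huj
  obtain ⟨hy1, hy2⟩ := hyM
  -- numeric facts
  haveI : NeZero n := ⟨by omega⟩
  have h1 : (1 : ZMod n) ≠ 0 := by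
    intro h
    have hd : (n : ℕ) ∣ 1 := (ZMod.natCast_eq_zero_iff 1 n).mp (by exact_mod_cast h)
    have := Nat.le_of_dvd one_pos hd
    omega
  have h2 : (2 : ZMod n) ≠ 0 := by
    intro h
    have hd : (n : ℕ) ∣ 2 := (ZMod.natCast_eq_zero_iff 2 n).mp (by exact_mod_cast h)
    have := Nat.le_of_dvd (by norm_num) hd
    omega
  have h3 : (3 : ZMod n) ≠ 0 := by
    intro h
    have hd : (n : ℕ) ∣ 3 := (ZMod.natCast_eq_zero_iff 3 n).mp (by exact_mod_cast h)
    have := Nat.le_of_dvd (by norm_num) hd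
    omega
  -- adjacency of ui/uj to the cycle
  have adj_ui : ∀ k : ZMod n, G.Adj ui (f k) ↔ (k = i ∨ k = i + 1) := by
    intro k
    constructor
    · intro h
      have hk : f k ∈ G.neighborSet ui ∩ Set.range f := ⟨h, ⟨k, rfl⟩⟩
      rw [huiC] at hk
      rcases hk with hk | hk
      · exact Or.inl (hinj hk)
      · exact Or.inr (hinj hk)
    · intro h
      have : f k ∈ ({f i, f (i+1)} : Set V) := by
        rcases h with h | h <;> simp [h]
      rw [← huiC] at this
      exact this.1
  have adj_uj : ∀ k : ZMod n, G.Adj uj (f k) ↔ (k = j ∨ k = j + 1) := by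
    intro k
    constructor
    · intro h
      have hk : f k ∈ G.neighborSet uj ∩ Set.range f := ⟨h, ⟨k, rfl⟩⟩
      rw [hujC] at hk
      rcases hk with hk | hk
      · exact Or.inl (hinj hk)
      · exact Or.inr (hinj hk)
    · intro h
      have : f k ∈ ({f j, f (j+1)} : Set V) := by
        rcases h with h | h <;> simp [h]
      rw [← hujC] at this
      exact this.1
  -- y is nonadjacent to the cycle
  have y_nonadj : ∀ k : ZMod n, ¬ G.Adj (f k) y := by
    intro k h
    exact hy2 ⟨hy1, f k, ⟨k, rfl⟩, h⟩
  -- ui, uj outside the cycle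
  have ui_nr : ui ∉ Set.range f := by
    rintro ⟨k, rfl⟩
    exact y_nonadj k hyui
  have uj_nr : uj ∉ Set.range f := by
    obtain ⟨-, y', hy'M, hy'adj⟩ := hujN
    rintro ⟨k, rfl⟩
    exact hy'M.2 ⟨hy'M.1, f k, ⟨k, rfl⟩, hy'adj.symm⟩
  -- choose a ∈ {i,i+1}, b ∈ {j,j+1} appropriately
  obtain ⟨a, b, hai, hbj, haj, haj1, hbi, hbi1, hba1, hab1, hab⟩ :
      ∃ a b : ZMod n, (a = i ∨ a = i+1) ∧ (b = j ∨ b = j+1) ∧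
        a ≠ j ∧ a ≠ j+1 ∧ b ≠ i ∧ b ≠ i+1 ∧ b ≠ a+1 ∧ a ≠ b+1 ∧ a ≠ b := by
    by_cases hc1 : j = i + 1
    · subst hc1
      refine ⟨i, i+2, Or.inl rfl, Or.inr (by ring), ?_, ?_, ?_, ?_, ?_, ?_, ?_⟩ <;>
        intro h <;>
        first
          | exact h1 (by linear_combination h)
          | exact h1 (by linear_combination -h)
          | exact h2 (by linear_combination h)
          | exact h2 (by linear_combination -h)
          | exact h3 (by linear_combination h)
          | exact h3 (by linear_combination -h)
    · by_cases hc2 : i = j + 1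
      · subst hc2
        refine ⟨j+2, j, Or.inr (by ring), Or.inl rfl, ?_, ?_, ?_, ?_, ?_, ?_, ?_⟩ <;>
          intro h <;>
          first
            | exact h1 (by linear_combination h)
            | exact h1 (by linear_combination -h)
            | exact h2 (by linear_combination h)
            | exact h2 (by linear_combination -h)
            | exact h3 (by linear_combination h)
            | exact h3 (by linear_combination -h)
      · exact ⟨i, j, Or.inl rfl, Or.inl rfl, hij, hc2, fun h => hij h.symm,
          hc1, hc1, hc2, hij⟩
  -- build the fork: ui - y, ui - f a, ui - uj, uj - f b
  apply hfork
  refine fork_of_pattern G ui y (f a) uj (f b) ?_ ?_ ?_ ?_ ?_ ?_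
    hyui ((adj_ui a).mpr hai) hadj ((adj_uj b).mpr hbj) ?_ ?_ ?_ ?_ ?_ ?_
  · exact fun h => ui_nr ⟨b, h.symm⟩
  · exact fun h => hy1 ⟨a, h.symm⟩
  · rintro rfl
    exact hujN.1 ⟨hy1, hy2⟩
  · exact fun h => hy1 ⟨b, h.symm⟩
  · exact fun h => uj_nr ⟨a, h⟩
  · exact fun h => hab (hinj h)
  · intro h
    rcases (adj_ui b).mp h with h' | h'
    · exact hbi h'
    · exact hbi1 h'
  · exact fun h => y_nonadj a h.symm
  · exact fun h => hyuj h.symm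
  · exact fun h => y_nonadj b h.symm
  · intro h
    rcases (adj_uj a).mp h.symm with h' | h'
    · exact haj h'
    · exact haj1 h'
  · intro h
    rcases (hcyc a b).mp h with h' | h'
    · exact hba1 h'
    · exact hab1 h'

theorem stmt11 {V : Type*} [Fintype V] (G : SimpleGraph V)
    (hfork : ¬ HasInducedCopy G fork) (hmin : MinimalNPD G)
    (v : V) (n : ℕ) (f : ZMod n → V) (hC : IsHole G n f) (hodd : Odd n)
    (hn : 5 ≤ n) (hMv : Set.range f ⊆ Mv G v)
    (i j : ZMod n) (hij : i ≠ j) (ui uj : V)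
    (hui : ui ∈ UiSet G n f i) (huj : uj ∈ UiSet G n f j) (hadj : G.Adj ui uj) :
    G.neighborSet ui ∩ MSet G (Set.range f) =
      G.neighborSet uj ∩ MSet G (Set.range f) := by
  ext y
  simp only [Set.mem_inter_iff, SimpleGraph.mem_neighborSet]
  constructor
  · rintro ⟨h1, h2⟩
    exact ⟨key_half G hfork n f hC hn i j hij ui uj hui huj hadj y h2 h1, h2⟩
  · rintro ⟨h1, h2⟩
    exact ⟨key_half G hfork n f hC hn j i (fun h => hij h.symm) uj ui huj hui
      hadj.symm y h2 h1, h2⟩
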